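/- Let H₀ be a Hilbert space and suppose a continuous kernel satisfies K(x,y) = ∫₀^∞ ⟨φ(s+x), φ(s+y)⟩_{H₀} ds for φ ∈ L²((0,∞); H₀). Then for every t > 0, the shifted kernel K_t(x,y) := K(x+t, y+t) is the kernel of Γ_φ* P_{(t,∞)} Γ_φ, where Γ_φ : L²(0,∞) → L²((0,∞);H₀) is the (vectorial) Hankel operator with symbol φ and P_{(t,∞)} is the projection onto L²(t,∞). In particular 0 ≤ K_t ≤ K_0 as operators, and K_t decreases as t increases. -/

import Mathlib

open MeasureTheory Set
open scoped ComplexInnerProductSpace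

lemma shift_integral_Ioi (g : ℝ → ℂ) (t : ℝ) :
    ∫ s in Ioi t, g s = ∫ s in Ioi (0:ℝ), g (s + t) := by
  rw [← (measurePreserving_add_right volume t).setIntegral_preimage_emb
    (measurableEmbedding_addRight t)]
  congr 1
  ext s; simp [lt_sub_iff_add_lt']

/-- Suppose the continuous kernel satisfies
`K(x,y) = ∫₀^∞ ⟪φ(s+x), φ(s+y)⟫ ds` for `φ ∈ L²((0,∞); H₀)`.  Then for every `t > 0` the
shifted kernel `K(x+t, y+t)` equals `∫_t^∞ ⟪φ(s+x), φ(s+y)⟫ ds`, which is the kernel of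
`Γ_φ* P_{(t,∞)} Γ_φ`; in particular the associated quadratic forms
`Q(t) = ∫_t^∞ ‖(Γ_φ f)(s)‖² ds` are nonnegative and decrease as `t` increases
(`0 ≤ K_t ≤ K_0`). -/
theorem stmt11 {H₀ : Type*} [NormedAddCommGroup H₀] [InnerProductSpace ℂ H₀]
    [CompleteSpace H₀]
    (φ : ℝ → H₀) (hφ : MemLp φ 2 (volume.restrict (Ioi (0 : ℝ))))
    (hint : ∀ x y : ℝ, 0 < x → 0 < y →
      IntegrableOn (fun s => (⟪φ (s + x), φ (s + y)⟫ : ℂ)) (Ioi (0 : ℝ)))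
    (K : ℝ → ℝ → ℂ)
    (hK : ∀ x y : ℝ, 0 < x → 0 < y →
      K x y = ∫ s in Ioi (0 : ℝ), (⟪φ (s + x), φ (s + y)⟫ : ℂ)) :
    (∀ t x y : ℝ, 0 < t → 0 < x → 0 < y →
      K (x + t) (y + t) = ∫ s in Ioi t, (⟪φ (s + x), φ (s + y)⟫ : ℂ)) ∧
    ∀ f : ℝ → ℂ,
      IntegrableOn (fun s => ‖∫ u in Ioi (0 : ℝ), f u • φ (s + u)‖ ^ 2) (Ioi (0 : ℝ)) →
      (∀ t : ℝ, 0 ≤ t →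
          0 ≤ ∫ s in Ioi t, ‖∫ u in Ioi (0 : ℝ), f u • φ (s + u)‖ ^ 2) ∧
      AntitoneOn (fun t => ∫ s in Ioi t, ‖∫ u in Ioi (0 : ℝ), f u • φ (s + u)‖ ^ 2)
        (Ici (0 : ℝ)) := by
  constructor
  · intro t x y ht hx hy
    rw [hK _ _ (by linarith) (by linarith),
      shift_integral_Ioi (fun s => (⟪φ (s + x), φ (s + y)⟫ : ℂ)) t]
    congr 1
    ext s
    ring_nf
  · intro f hf
    constructor
    · intro t ht
      apply setIntegral_nonneg measurableSet_Ioi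
      intro s _
      positivity
    · intro a ha b hb hab
      apply setIntegral_mono_set (hf.mono_set (Ioi_subset_Ioi ha))
      · filter_upwards with s using by positivity
      · exact HasSubset.Subset.eventuallyLE (Ioi_subset_Ioi hab)
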